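/- arXiv:2008.07024 — 3 statements merged into one kernel-verified Lean document; each statement's English description precedes it below -/
import Mathlib

section
/- There exists δ ∈ (0, 1) such that for every z ∈ ℂ with 1 − δ ≤ |z| ≤ 1 (and z ≠ 0): p_z(x₀(z)) ≥ −1.42, and p_z(x_k(z)) ≥ 5.81·|k|^{3/2} for every integer k ≠ 0. -/
open MeasureTheory Filter Topology

noncomputable section

/-- θ_k(z) = −2·Arg z + 4πk. -/
def thetaK (z : ℂ) (k : ℤ) : ℝ := -(2 * Complex.arg z) + 4 * Real.pi * (k : ℝ)

/-- x_k(z) = −(−log|z| + ((log|z|)² + θ_k(z)²/4)^{1/2})^{1/2}, the real part of the Bethe root. -/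
def xkR (z : ℂ) (k : ℤ) : ℝ :=
  -Real.sqrt (-Real.log (‖z‖) +
      Real.sqrt ((Real.log (‖z‖)) ^ 2 + (thetaK z k) ^ 2 / 4))

/-- The cubic polynomial p_z(w) = −2w³ + 3w(1 − 2·log|z|). -/
def pz (z : ℂ) (w : ℝ) : ℝ := -2 * w ^ 3 + 3 * w * (1 - 2 * Real.log (‖z‖))

set_option maxHeartbeats 1000000 in
theorem statement10 :
    ∃ δ ∈ Set.Ioo (0 : ℝ) 1, ∀ z : ℂ, z ≠ 0 → 1 - δ ≤ ‖z‖ → ‖z‖ ≤ 1 →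
      -1.42 ≤ pz z (xkR z 0) ∧
      ∀ k : ℤ, k ≠ 0 → 5.81 * |(k : ℝ)| ^ ((3 : ℝ) / 2) ≤ pz z (xkR z k) := by
  refine ⟨1/2500, by norm_num, ?_⟩
  intro z hz h1 h2
  have hr0 : 0 < ‖z‖ := norm_pos_iff.mpr hz
  set L : ℝ := Real.log (‖z‖) with hL
  have hL0 : L ≤ 0 := Real.log_nonpos hr0.le h2
  have hLlb : -(1/2000 : ℝ) ≤ L := by
    rw [hL, Real.le_log_iff_exp_le hr0]
    have he : Real.exp (-(1/2000 : ℝ)) ≤ 1 - 1/2500 := by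
      rw [Real.exp_neg]
      have h1 : (1/2000 : ℝ) + 1 ≤ Real.exp (1/2000) := Real.add_one_le_exp _
      have h2 : (0:ℝ) < 1/2000 + 1 := by norm_num
      have : (Real.exp (1/2000))⁻¹ ≤ ((1/2000 : ℝ) + 1)⁻¹ :=
        inv_anti₀ h2 h1
      calc (Real.exp (1/2000))⁻¹ ≤ ((1/2000 : ℝ) + 1)⁻¹ := this
        _ ≤ 1 - 1/2500 := by norm_num
    linarith [h1, he]
  set a : ℝ := -L with ha
  have ha0 : 0 ≤ a := by linarith
  have ha1 : a ≤ 1/2000 := by linarith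
  -- general facts about s for any k
  have key : ∀ k : ℤ,
      ∃ s : ℝ, 0 ≤ s ∧ s ^ 2 = a + Real.sqrt (a ^ 2 + (thetaK z k) ^ 2 / 4) ∧
        pz z (xkR z k) = 2 * s ^ 3 - 3 * s * (1 + 2 * a) := by
    intro k
    have hq0 : 0 ≤ Real.sqrt (a ^ 2 + (thetaK z k) ^ 2 / 4) := Real.sqrt_nonneg _
    refine ⟨Real.sqrt (a + Real.sqrt (a ^ 2 + (thetaK z k) ^ 2 / 4)), Real.sqrt_nonneg _, ?_, ?_⟩
    · exact Real.sq_sqrt (by linarith)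
    · have hx : xkR z k = -Real.sqrt (a + Real.sqrt (a ^ 2 + (thetaK z k) ^ 2 / 4)) := by
        unfold xkR
        rw [← hL]
        have : L ^ 2 = a ^ 2 := by rw [ha]; ring
        rw [this, ha]
      rw [hx]
      unfold pz
      rw [← hL]
      have : L = -a := by rw [ha]; ring
      rw [this]
      ring
  constructor
  · -- k = 0 case
    obtain ⟨s, hs0, hs2, hp⟩ := key 0
    rw [hp]
    set r0 : ℝ := Real.sqrt 0.5005 with hr0def
    have hr0sq : r0 ^ 2 = 0.5005 := Real.sq_sqrt (by norm_num)
    have hr0nn : 0 ≤ r0 := Real.sqrt_nonneg _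
    have hr0le : r0 ≤ 0.708 := by nlinarith
    have hcube : 2 * (s - r0) ^ 2 * (s + 2 * r0) ≥ 0 := by positivity
    nlinarith [mul_nonneg ha0 hs0, mul_nonneg (mul_nonneg ha0 hs0) hs0,
      mul_le_mul_of_nonneg_right ha1 hs0]
  · -- k ≠ 0 case
    intro k hk
    obtain ⟨s, hs0, hs2, hp⟩ := key k
    rw [hp]
    set M : ℝ := |(k : ℝ)| with hM
    have hM1 : (1 : ℝ) ≤ M := by
      rw [hM, ← Int.cast_abs]
      exact_mod_cast Int.one_le_abs hk
    have hM0 : (0:ℝ) ≤ M := by linarith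
    have hpi : (3.141592 : ℝ) < Real.pi := Real.pi_gt_d6
    have hpi2 : Real.pi < 3.15 := by
      have := Real.pi_lt_d2
      linarith
    -- θ² ≥ 4 π² M²
    have hA : |Complex.arg z| ≤ Real.pi := Complex.abs_arg_le_pi z
    have hMk : M ^ 2 = (k : ℝ) ^ 2 := by rw [hM, sq_abs]
    have hAk : Complex.arg z * (k : ℝ) ≤ |Complex.arg z| * M := by
      calc Complex.arg z * (k : ℝ) ≤ |Complex.arg z * (k : ℝ)| := le_abs_self _
        _ = |Complex.arg z| * M := by rw [abs_mul, hM]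
    have hAnn : 0 ≤ |Complex.arg z| := abs_nonneg _
    have htheta : 4 * Real.pi ^ 2 * M ^ 2 ≤ (thetaK z k) ^ 2 := by
      unfold thetaK
      have hf1 : 0 ≤ (Real.pi * M - |Complex.arg z|) := by nlinarith
      have hf2 : 0 ≤ (3 * Real.pi * M - |Complex.arg z|) := by nlinarith
      nlinarith [sq_abs (Complex.arg z), mul_nonneg hf1 hf2]
    -- s² ≥ a + πM ≥ πM
    have hqarg : (Real.pi * M) ^ 2 ≤ a ^ 2 + (thetaK z k) ^ 2 / 4 := by
      nlinarith [sq_nonneg a]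
    have hq : Real.pi * M ≤ Real.sqrt (a ^ 2 + (thetaK z k) ^ 2 / 4) :=
      (Real.le_sqrt (mul_nonneg Real.pi_pos.le hM0)
        (le_trans (sq_nonneg _) hqarg)).mpr hqarg
    have hs2lb : Real.pi * M ≤ s ^ 2 := by rw [hs2]; linarith
    have hslb : Real.sqrt Real.pi * Real.sqrt M ≤ s := by
      rw [← Real.sqrt_mul Real.pi_pos.le]
      calc Real.sqrt (Real.pi * M) ≤ Real.sqrt (s ^ 2) := Real.sqrt_le_sqrt hs2lb
        _ = s := Real.sqrt_sq hs0
    have hrM : Real.sqrt M ^ 2 = M := Real.sq_sqrt hM0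
    have hrMnn : 0 ≤ Real.sqrt M := Real.sqrt_nonneg _
    have hrpi : (1.7724 : ℝ) ≤ Real.sqrt Real.pi := by
      rw [Real.le_sqrt (by norm_num) Real.pi_pos.le]
      nlinarith
    -- rewrite the power
    have hpow : |(k : ℝ)| ^ ((3 : ℝ) / 2) = M * Real.sqrt M := by
      rw [← hM, show (3:ℝ)/2 = 1 + 1/2 by norm_num,
        Real.rpow_add (by positivity : (0:ℝ) < M), Real.rpow_one,
        ← Real.sqrt_eq_rpow]
    rw [hpow]
    -- p = s (2 s² - 3 - 6a) ≥ √π √M (2π - 3.002) M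
    have hB : (2 * Real.pi - 3.002) * M ≤ 2 * s ^ 2 - 3 - 6 * a := by
      rw [hs2]; nlinarith
    have hBnn : (0:ℝ) ≤ (2 * Real.pi - 3.002) * M := by nlinarith
    have hsnn2 : 0 ≤ Real.sqrt Real.pi * Real.sqrt M := by positivity
    have hprod : Real.sqrt Real.pi * Real.sqrt M * ((2 * Real.pi - 3.002) * M) ≤
        s * (2 * s ^ 2 - 3 - 6 * a) := mul_le_mul hslb hB hBnn hs0
    have hfin : 5.81 * (M * Real.sqrt M) ≤
        Real.sqrt Real.pi * Real.sqrt M * ((2 * Real.pi - 3.002) * M) := by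
      have hc : (5.81 : ℝ) ≤ Real.sqrt Real.pi * (2 * Real.pi - 3.002) := by nlinarith
      have hMs : 0 ≤ M * Real.sqrt M := by positivity
      calc 5.81 * (M * Real.sqrt M) ≤ (Real.sqrt Real.pi * (2 * Real.pi - 3.002)) * (M * Real.sqrt M) :=
            mul_le_mul_of_nonneg_right hc hMs
        _ = Real.sqrt Real.pi * Real.sqrt M * ((2 * Real.pi - 3.002) * M) := by ring
    nlinarith [hprod, hfin]
end
end

section
/- For every δ₁ ∈ (0, 1) there exists c > 0 such that |u_k(z)| ≥ c·√(|k| + 1) and |u_j(z) + u_k(z)| ≥ c·√(|j| + |k| + 2) for all z ∈ ℂ with 0 < |z| < 1 − δ₁ and all integers j, k. -/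
open MeasureTheory Filter Topology

noncomputable section

/-- The Bethe roots u_k(z) = −(−2·log|z| + i·θ_k(z))^{1/2} (principal branch). -/
def uK (z : ℂ) (k : ℤ) : ℂ :=
  -((((-2 * Real.log (‖z‖) : ℝ) : ℂ) + Complex.I * ((thetaK z k : ℝ) : ℂ)) ^ ((1 : ℂ) / 2))

def wK (z : ℂ) (k : ℤ) : ℂ :=
  (((-2 * Real.log (‖z‖) : ℝ) : ℂ) + Complex.I * ((thetaK z k : ℝ) : ℂ))

lemma uK_eq (z : ℂ) (k : ℤ) : uK z k = -(wK z k ^ ((1:ℂ)/2)) := rfl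

lemma wK_re (z : ℂ) (k : ℤ) : (wK z k).re = -2 * Real.log (‖z‖) := by
  simp [wK]

lemma wK_im (z : ℂ) (k : ℤ) : (wK z k).im = thetaK z k := by
  simp [wK]

lemma abs_half_pow (w : ℂ) (hw : w ≠ 0) :
    ‖w ^ ((1:ℂ)/2)‖ = Real.sqrt (‖w‖) := by
  rw [Complex.norm_cpow_of_ne_zero hw]
  simp [Real.sqrt_eq_rpow]

lemma re_half_pow (w : ℂ) (hw : 0 < w.re) :
    Real.sqrt 2 / 2 * Real.sqrt (‖w‖) ≤ (w ^ ((1:ℂ)/2)).re := by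
  have hw0 : w ≠ 0 := by
    intro h; rw [h] at hw; simp at hw
  rw [Complex.cpow_def_of_ne_zero hw0, Complex.exp_re]
  have hre : (Complex.log w * ((1:ℂ)/2)).re = 1/2 * Real.log (‖w‖) := by
    simp [Complex.log_re, Complex.mul_re, Complex.log_im]; ring
  have him : (Complex.log w * ((1:ℂ)/2)).im = 1/2 * Complex.arg w := by
    simp [Complex.log_im, Complex.mul_im, Complex.log_re]; ring
  rw [hre, him]
  have habs : 0 < ‖w‖ := norm_pos_iff.mpr hw0
  have hexp : Real.exp (1/2 * Real.log (‖w‖)) = Real.sqrt (‖w‖) := by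
    rw [Real.sqrt_eq_rpow, Real.rpow_def_of_pos habs]; ring_nf
  rw [hexp]
  have harg : |Complex.arg w| < Real.pi / 2 :=
    Complex.abs_arg_lt_pi_div_two_iff.mpr (Or.inl hw)
  have hcos : Real.sqrt 2 / 2 ≤ Real.cos (1/2 * Complex.arg w) := by
    rw [← Real.cos_abs, ← Real.cos_pi_div_four]
    apply Real.cos_le_cos_of_nonneg_of_le_pi (abs_nonneg _)
    · linarith [Real.pi_pos]
    · rw [abs_mul]
      have : |(1:ℝ)/2| = 1/2 := by norm_num
      rw [this]; linarith
  nlinarith [Real.sqrt_nonneg (‖w‖), Real.sqrt_nonneg (2:ℝ)]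

lemma sqrt_add_le (x y : ℝ) (hx : 0 ≤ x) (hy : 0 ≤ y) :
    Real.sqrt (x + y) ≤ Real.sqrt x + Real.sqrt y := by
  have h : x + y ≤ (Real.sqrt x + Real.sqrt y) ^ 2 := by
    nlinarith [Real.sq_sqrt hx, Real.sq_sqrt hy, Real.sqrt_nonneg x, Real.sqrt_nonneg y]
  calc Real.sqrt (x + y) ≤ Real.sqrt ((Real.sqrt x + Real.sqrt y) ^ 2) := Real.sqrt_le_sqrt h
    _ = Real.sqrt x + Real.sqrt y := Real.sqrt_sq (by positivity)

theorem statement12 (δ₁ : ℝ) (h0 : 0 < δ₁) (h1 : δ₁ < 1) :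
    ∃ c > (0 : ℝ), ∀ z : ℂ, 0 < ‖z‖ → ‖z‖ < 1 - δ₁ →
      (∀ k : ℤ, c * Real.sqrt (|(k : ℝ)| + 1) ≤ ‖uK z k‖) ∧
      (∀ j k : ℤ, c * Real.sqrt (|(j : ℝ)| + |(k : ℝ)| + 2) ≤ ‖uK z j + uK z k‖) := by
  have hpi := Real.pi_pos
  set a₀ : ℝ := -2 * Real.log (1 - δ₁) with ha₀def
  have ha₀ : 0 < a₀ := by
    have : Real.log (1 - δ₁) < 0 := Real.log_neg (by linarith) (by linarith)
    simp only [ha₀def]; linarith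
  set c₁ : ℝ := min a₀ Real.pi with hc₁def
  have hc₁ : 0 < c₁ := lt_min ha₀ hpi
  refine ⟨Real.sqrt c₁ / Real.sqrt 2, by positivity, ?_⟩
  intro z hz0 hz1
  -- basic facts about w
  have hre : ∀ k : ℤ, 0 < (wK z k).re := by
    intro k
    rw [wK_re]
    have : Real.log (‖z‖) < 0 := Real.log_neg hz0 (by linarith)
    linarith
  have hwne : ∀ k : ℤ, wK z k ≠ 0 := by
    intro k h
    have := hre k
    rw [h] at this; simp at this
  -- key lower bound on |wK z k|
  have hkey : ∀ k : ℤ, c₁ * (|(k : ℝ)| + 1) ≤ ‖wK z k‖ := by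
    intro k
    have hrele : |(wK z k).re| ≤ ‖wK z k‖ := Complex.abs_re_le_norm _
    have himle : |(wK z k).im| ≤ ‖wK z k‖ := Complex.abs_im_le_norm _
    have ha : a₀ ≤ (wK z k).re := by
      rw [wK_re]
      have : Real.log (‖z‖) ≤ Real.log (1 - δ₁) :=
        le_of_lt (Real.log_lt_log hz0 hz1)
      simp only [ha₀def]; linarith
    rcases eq_or_ne k 0 with hk | hk
    · subst hk
      simp only [Int.cast_zero, abs_zero, zero_add, mul_one]
      have : c₁ ≤ (wK z 0).re := le_trans (min_le_left _ _) ha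
      calc c₁ ≤ (wK z 0).re := this
        _ ≤ |(wK z 0).re| := le_abs_self _
        _ ≤ _ := hrele
    · have hk1 : (1 : ℝ) ≤ |(k : ℝ)| := by
        rw [← Int.cast_abs]
        exact_mod_cast Int.one_le_abs hk
      have hargz : |Complex.arg z| ≤ Real.pi := Complex.abs_arg_le_pi z
      have hθ : 4 * Real.pi * |(k : ℝ)| - 2 * Real.pi ≤ |(wK z k).im| := by
        rw [wK_im]
        unfold thetaK
        have h1 : |4 * Real.pi * (k : ℝ)| - |2 * Complex.arg z| ≤
            |(-(2 * Complex.arg z) + 4 * Real.pi * (k : ℝ))| := by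
          have := abs_add_le (-(2 * Complex.arg z) + 4 * Real.pi * (k : ℝ)) (2 * Complex.arg z)
          simp only [neg_add_cancel_comm] at this
          linarith
        have h2 : |4 * Real.pi * (k : ℝ)| = 4 * Real.pi * |(k : ℝ)| := by
          rw [abs_mul, abs_of_pos (by positivity : (0:ℝ) < 4 * Real.pi)]
        have h3 : |2 * Complex.arg z| ≤ 2 * Real.pi := by
          rw [abs_mul]; simp; linarith
        rw [h2] at h1
        linarith
      have hπ : c₁ ≤ Real.pi := min_le_right _ _
      have : c₁ * (|(k : ℝ)| + 1) ≤ 4 * Real.pi * |(k : ℝ)| - 2 * Real.pi := by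
        nlinarith
      linarith
  -- |uK z k| = sqrt |wK z k|
  have habsu : ∀ k : ℤ, ‖uK z k‖ = Real.sqrt (‖wK z k‖) := by
    intro k
    rw [uK_eq, norm_neg, abs_half_pow _ (hwne k)]
  have hsqrtkey : ∀ k : ℤ, Real.sqrt c₁ * Real.sqrt (|(k : ℝ)| + 1) ≤
      Real.sqrt (‖wK z k‖) := by
    intro k
    rw [← Real.sqrt_mul hc₁.le]
    exact Real.sqrt_le_sqrt (hkey k)
  have hs2 : (1:ℝ) ≤ Real.sqrt 2 := by
    nlinarith [Real.sq_sqrt (by norm_num : (0:ℝ) ≤ 2), Real.sqrt_nonneg (2:ℝ)]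
  constructor
  · intro k
    rw [habsu k]
    calc Real.sqrt c₁ / Real.sqrt 2 * Real.sqrt (|(k : ℝ)| + 1)
        ≤ Real.sqrt c₁ * Real.sqrt (|(k : ℝ)| + 1) := by
          have h1 : Real.sqrt c₁ / Real.sqrt 2 ≤ Real.sqrt c₁ := by
            rw [div_le_iff₀ (by linarith : (0:ℝ) < Real.sqrt 2)]
            nlinarith [Real.sqrt_nonneg c₁]
          have h2 : (0:ℝ) ≤ Real.sqrt (|(k : ℝ)| + 1) := Real.sqrt_nonneg _
          nlinarith
      _ ≤ _ := hsqrtkey k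
  · intro j k
    -- real part bound
    have hresum : Real.sqrt 2 / 2 * (Real.sqrt (‖wK z j‖) +
        Real.sqrt (‖wK z k‖)) ≤ |(uK z j + uK z k).re| := by
      have hj := re_half_pow (wK z j) (hre j)
      have hk := re_half_pow (wK z k) (hre k)
      have : (uK z j + uK z k).re = -((wK z j ^ ((1:ℂ)/2)).re + (wK z k ^ ((1:ℂ)/2)).re) := by
        rw [uK_eq, uK_eq]; simp; ring
      rw [this, abs_neg]
      have h2 : (0:ℝ) < Real.sqrt 2 / 2 := by positivity
      have hnn : 0 ≤ (wK z j ^ ((1:ℂ)/2)).re + (wK z k ^ ((1:ℂ)/2)).re := by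
        nlinarith [Real.sqrt_nonneg (‖wK z j‖), Real.sqrt_nonneg (‖wK z k‖)]
      rw [abs_of_nonneg hnn]
      linarith
    have hfinal : |(uK z j + uK z k).re| ≤ ‖uK z j + uK z k‖ :=
      Complex.abs_re_le_norm _
    -- combine
    have hsum : Real.sqrt (|(j : ℝ)| + |(k : ℝ)| + 2) ≤
        Real.sqrt (|(j : ℝ)| + 1) + Real.sqrt (|(k : ℝ)| + 1) := by
      have : |(j : ℝ)| + |(k : ℝ)| + 2 = (|(j : ℝ)| + 1) + (|(k : ℝ)| + 1) := by ring
      rw [this]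
      exact sqrt_add_le _ _ (by positivity) (by positivity)
    have h22 : Real.sqrt 2 ^ 2 = 2 := Real.sq_sqrt (by norm_num)
    have hcc : Real.sqrt c₁ / Real.sqrt 2 = Real.sqrt 2 / 2 * Real.sqrt c₁ := by
      rw [div_eq_iff (by linarith : Real.sqrt 2 ≠ 0)]
      linear_combination (-(Real.sqrt c₁) / 2) * h22
    calc Real.sqrt c₁ / Real.sqrt 2 * Real.sqrt (|(j : ℝ)| + |(k : ℝ)| + 2)
        ≤ Real.sqrt c₁ / Real.sqrt 2 * (Real.sqrt (|(j : ℝ)| + 1) + Real.sqrt (|(k : ℝ)| + 1)) := by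
          have : (0:ℝ) ≤ Real.sqrt c₁ / Real.sqrt 2 := by positivity
          nlinarith
      _ = Real.sqrt 2 / 2 * (Real.sqrt c₁ * Real.sqrt (|(j : ℝ)| + 1) +
            Real.sqrt c₁ * Real.sqrt (|(k : ℝ)| + 1)) := by rw [hcc]; ring
      _ ≤ Real.sqrt 2 / 2 * (Real.sqrt (‖wK z j‖) + Real.sqrt (‖wK z k‖)) := by
          have h2 : (0:ℝ) ≤ Real.sqrt 2 / 2 := by positivity
          nlinarith [hsqrtkey j, hsqrtkey k]
      _ ≤ |(uK z j + uK z k).re| := hresum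
      _ ≤ _ := hfinal
end
end

section
/- Let r ≥ 1, let s ∈ ℂ, let U be an open neighborhood of s, let G : U → M be analytic (where M is the space of r×r complex matrices), and let A, R ∈ M satisfy R·R = 0. Define X(ξ) := (ξ − s)^{−1}·A + G(ξ) for ξ ∈ U ∖ {s}, so that X has a simple pole at s with residue A. Then the following are equivalent: (i) the limit lim_{ξ→s} X(ξ)·R exists and equals A (i.e. the residue of X at s equals lim_{ξ→s} X(ξ)·R); (ii) the matrix-valued function ξ ↦ X(ξ)·(I − (ξ − s)^{−1}·R), defined on U ∖ {s}, extends to a function analytic on all of U. Moreover, both conditions are equivalent to the single equation A = G(s)·R. -/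
open Filter Topology

noncomputable section

theorem statement19 (r : ℕ) (hr : 1 ≤ r) (s : ℂ) (U : Set ℂ) (hU : IsOpen U) (hsU : s ∈ U)
    (G : ℂ → Matrix (Fin r) (Fin r) ℂ)
    (hG : ∀ i j : Fin r, AnalyticOnNhd ℂ (fun ξ => G ξ i j) U)
    (A R : Matrix (Fin r) (Fin r) ℂ) (hR : R * R = 0) :
    (Filter.Tendsto (fun ξ : ℂ => ((ξ - s)⁻¹ • A + G ξ) * R) (𝓝[≠] s) (𝓝 A) ↔
        A = G s * R) ∧
    ((∃ H : ℂ → Matrix (Fin r) (Fin r) ℂ,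
        (∀ i j : Fin r, AnalyticOnNhd ℂ (fun ξ => H ξ i j) U) ∧
        ∀ ξ ∈ U \ {s}, H ξ = ((ξ - s)⁻¹ • A + G ξ) * (1 - (ξ - s)⁻¹ • R)) ↔
      A = G s * R) := by
  -- continuity of G at s
  have hGc : ContinuousAt G s := by
    refine continuousAt_pi.2 fun i => ?_; rw [continuousAt_pi]; intro j
    exact ((hG i j) s hsU).continuousAt
  have hGR : ContinuousAt (fun ξ => G ξ * R) s := hGc.mul continuousAt_const
  have hsub : Tendsto (fun ξ : ℂ => ξ - s) (𝓝[≠] s) (𝓝 0) := by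
    have h : Tendsto (fun ξ : ℂ => ξ - s) (𝓝 s) (𝓝 (s - s)) :=
      Filter.Tendsto.sub tendsto_id tendsto_const_nhds
    rw [sub_self] at h
    exact h.mono_left nhdsWithin_le_nhds
  have hmem : U \ {s} ∈ 𝓝[≠] s := by
    rw [Set.diff_eq]
    exact Filter.inter_mem (mem_nhdsWithin_of_mem_nhds (hU.mem_nhds hsU)) self_mem_nhdsWithin
  constructor
  · -- first equivalence
    constructor
    · intro h
      -- multiply by (ξ - s) to extract A * R
      have h2 : Tendsto (fun ξ : ℂ => (ξ - s) • (((ξ - s)⁻¹ • A + G ξ) * R)) (𝓝[≠] s)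
          (𝓝 ((0:ℂ) • A)) := hsub.smul h
      have h4 : Tendsto (fun ξ : ℂ => A * R + (ξ - s) • (G ξ * R)) (𝓝[≠] s)
          (𝓝 (A * R + (0:ℂ) • (G s * R))) :=
        tendsto_const_nhds.add (hsub.smul (hGR.mono_left nhdsWithin_le_nhds))
      have h3 : Tendsto (fun ξ : ℂ => A * R + (ξ - s) • (G ξ * R)) (𝓝[≠] s) (𝓝 ((0:ℂ) • A)) := by
        apply h2.congr'
        filter_upwards [self_mem_nhdsWithin] with ξ hξ
        have hc : (ξ - s) ≠ 0 := sub_ne_zero.2 hξ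
        rw [Matrix.add_mul, Matrix.smul_mul, smul_add, smul_smul, mul_inv_cancel₀ hc, one_smul]
      have hAR : A * R = 0 := by
        have := tendsto_nhds_unique h3 h4
        simpa using this.symm
      -- now the function agrees with G ξ * R
      have h5 : Tendsto (fun ξ : ℂ => G ξ * R) (𝓝[≠] s) (𝓝 A) := by
        apply h.congr
        intro ξ
        rw [Matrix.add_mul, Matrix.smul_mul, hAR, smul_zero, zero_add]
      exact tendsto_nhds_unique h5 (hGR.mono_left nhdsWithin_le_nhds)
    · intro hA
      have hAR : A * R = 0 := by rw [hA, Matrix.mul_assoc, hR, Matrix.mul_zero]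
      have h5 : Tendsto (fun ξ : ℂ => G ξ * R) (𝓝[≠] s) (𝓝 (G s * R)) :=
        hGR.mono_left nhdsWithin_le_nhds
      rw [hA]
      apply h5.congr
      intro ξ
      rw [Matrix.add_mul, Matrix.smul_mul, Matrix.mul_assoc, hR, Matrix.mul_zero, smul_zero,
        zero_add]
  · constructor
    · rintro ⟨H, hHa, hHeq⟩
      have hHc : ContinuousAt H s := by
        refine continuousAt_pi.2 fun i => ?_; rw [continuousAt_pi]; intro j
        exact ((hHa i j) s hsU).continuousAt
      -- key algebraic identity on U \ {s}
      have expand : ∀ ξ ∈ U \ {s},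
          (ξ - s) • (H ξ - G ξ) = (A - G ξ * R) - (ξ - s)⁻¹ • (A * R) := by
        intro ξ hξ
        have hc : ξ - s ≠ 0 := sub_ne_zero.2 (by exact hξ.2)
        rw [hHeq ξ hξ]
        simp only [Matrix.mul_sub, Matrix.mul_one, Matrix.add_mul, Matrix.smul_mul,
          Matrix.mul_smul]
        match_scalars <;> (field_simp; try ring)
      -- ψ := (ξ - s) • ((ξ - s) • (H ξ - G ξ)) tends to 0 and to -(A * R)
      have hHG : Tendsto (fun ξ : ℂ => H ξ - G ξ) (𝓝[≠] s) (𝓝 (H s - G s)) :=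
        (hHc.sub hGc).mono_left nhdsWithin_le_nhds
      have hphi : Tendsto (fun ξ : ℂ => (ξ - s) • (H ξ - G ξ)) (𝓝[≠] s)
          (𝓝 ((0:ℂ) • (H s - G s))) := hsub.smul hHG
      have hpsi : Tendsto (fun ξ : ℂ => (ξ - s) • ((ξ - s) • (H ξ - G ξ))) (𝓝[≠] s)
          (𝓝 ((0:ℂ) • ((0:ℂ) • (H s - G s)))) := hsub.smul hphi
      have hpsi2 : Tendsto (fun ξ : ℂ => (ξ - s) • (A - G ξ * R) - A * R) (𝓝[≠] s)
          (𝓝 ((0:ℂ) • ((0:ℂ) • (H s - G s)))) := by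
        apply hpsi.congr'
        filter_upwards [hmem] with ξ hξ
        have hc : ξ - s ≠ 0 := sub_ne_zero.2 (by exact hξ.2)
        rw [expand ξ hξ, smul_sub, smul_smul, mul_inv_cancel₀ hc, one_smul]
      have hpsi3 : Tendsto (fun ξ : ℂ => (ξ - s) • (A - G ξ * R) - A * R) (𝓝[≠] s)
          (𝓝 ((0:ℂ) • (A - G s * R) - A * R)) :=
        (hsub.smul ((continuousAt_const.sub hGR).mono_left nhdsWithin_le_nhds)).sub
          tendsto_const_nhds
      have hAR : A * R = 0 := by
        have := tendsto_nhds_unique hpsi2 hpsi3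
        simp only [zero_smul, zero_sub] at this
        simpa using this.symm
      -- now φ := (ξ - s) • (H ξ - G ξ) agrees with A - G ξ * R
      have hphi2 : Tendsto (fun ξ : ℂ => A - G ξ * R) (𝓝[≠] s)
          (𝓝 ((0:ℂ) • (H s - G s))) := by
        apply hphi.congr'
        filter_upwards [hmem] with ξ hξ
        rw [expand ξ hξ, hAR, smul_zero, sub_zero]
      have hphi3 : Tendsto (fun ξ : ℂ => A - G ξ * R) (𝓝[≠] s) (𝓝 (A - G s * R)) :=
        (continuousAt_const.sub hGR).mono_left nhdsWithin_le_nhds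
      have := tendsto_nhds_unique hphi2 hphi3
      rw [zero_smul] at this
      exact sub_eq_zero.mp this.symm
    · intro hA
      have hAR : A * R = 0 := by rw [hA, Matrix.mul_assoc, hR, Matrix.mul_zero]
      -- F ξ := A - G ξ * R is analytic on U and vanishes at s
      set F : ℂ → Matrix (Fin r) (Fin r) ℂ := fun ξ => A - G ξ * R with hF
      have hFs : F s = 0 := by rw [hF]; simp [← hA]
      have hFa : ∀ i j : Fin r, AnalyticOnNhd ℂ (fun ξ => F ξ i j) U := by
        intro i j
        have : AnalyticOnNhd ℂ (fun ξ => (G ξ * R) i j) U := by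
          simp only [Matrix.mul_apply]
          exact Finset.analyticOnNhd_fun_sum _ (fun k _ => (hG i k).mul analyticOnNhd_const)
        simpa only [hF, Matrix.sub_apply, Pi.sub_def] using
          (analyticOnNhd_const (v := A i j)).sub this
      -- define H via dslope applied entrywise
      refine ⟨fun ξ => Matrix.of fun i j => G ξ i j + dslope (fun ζ => F ζ i j) s ξ, ?_, ?_⟩
      · intro i j
        intro ξ hξ
        simp only [Matrix.of_apply]
        apply AnalyticAt.add ((hG i j) ξ hξ)
        by_cases hxs : ξ = s
        · subst hxs
          obtain ⟨p, hp⟩ := (hFa i j) ξ hξ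
          exact ⟨p.fslope, hp.has_fpower_series_dslope_fslope⟩
        · have hc : ξ - s ≠ 0 := sub_ne_zero.2 hxs
          have hg : AnalyticAt ℂ (fun ζ : ℂ => (F ζ i j - F s i j) / (ζ - s)) ξ :=
            (((hFa i j) ξ hξ).sub analyticAt_const).div
              (analyticAt_id.sub analyticAt_const) hc
          apply hg.congr
          filter_upwards [eventually_ne_nhds hxs] with ζ hζ
          rw [dslope_of_ne _ hζ, slope_def_field]
      · intro ξ hξ
        have hc : ξ - s ≠ 0 := sub_ne_zero.2 (by exact hξ.2)
        have hentry : (Matrix.of fun i j => G ξ i j + dslope (fun ζ => F ζ i j) s ξ)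
            = G ξ + (ξ - s)⁻¹ • F ξ := by
          ext i j
          rw [Matrix.of_apply, Matrix.add_apply, Matrix.smul_apply,
            dslope_of_ne _ (by exact hξ.2 : ξ ≠ s), slope_def_field, hFs]
          simp [div_eq_inv_mul]
        refine hentry.trans ?_
        simp only [Matrix.mul_sub, Matrix.mul_one, Matrix.add_mul, Matrix.smul_mul,
          Matrix.mul_smul, hAR, hF, smul_zero]
        match_scalars <;> (field_simp; try ring)
end
end
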